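/- Let 𝓖 = (V, 𝓔) be a connected graph such that there exists a nonedge e ∈ [V]²∖𝓔 for which the identification 𝓖_e has no isolated vertices. Then there exists an edge e' ∈ 𝓔 such that 𝓖_{e'} has no isolated vertices. -/

import Mathlib

open Finset

abbrev BF := Σ n : ℕ, (Fin n → Bool) → Bool

def Minor (g f : BF) : Prop :=
  ∃ σ : Fin f.1 → Fin g.1, ∀ a : Fin g.1 → Bool, g.2 a = f.2 (a ∘ σ)

def EquivBF (f g : BF) : Prop := Minor f g ∧ Minor g f

def StrictMinor (g f : BF) : Prop := Minor g f ∧ ¬ Minor f g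

def Essential {n : ℕ} (f : (Fin n → Bool) → Bool) (i : Fin n) : Prop :=
  ∃ a b : Fin n → Bool, (∀ j, j ≠ i → a j = b j) ∧ f a ≠ f b

noncomputable def essArity {n : ℕ} (f : (Fin n → Bool) → Bool) : ℕ :=
  Nat.card {i : Fin n // Essential f i}

noncomputable def gapBF (f : BF) : ℕ :=
  sInf {d | ∃ g : BF, StrictMinor g f ∧ d = essArity f.2 - essArity g.2}

def fH {n : ℕ} (𝓔 : Finset (Finset (Fin n))) : (Fin n → Bool) → Bool :=
  fun a => decide (Odd (𝓔.filter (fun E => ∀ i ∈ E, a i = true)).card)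

def IsQuotientMap {n m : ℕ} (𝓔 : Finset (Finset (Fin n)))
    (𝓔' : Finset (Finset (Fin m))) (h : Fin m → Fin n) : Prop :=
  ∀ s : Finset (Fin n), s ∈ 𝓔 ↔ Odd (𝓔'.filter (fun t => t.image h = s)).card

abbrev HG := Σ n : ℕ, Finset (Finset (Fin n))

def HMinor (H H' : HG) : Prop := ∃ h : Fin H'.1 → Fin H.1, IsQuotientMap H.2 H'.2 h

def identEdges {n : ℕ} (𝓔 : Finset (Finset (Fin n))) (i j : Fin n) :
    Finset (Finset (Fin n)) :=
  Finset.univ.filter (fun E => j ∉ E ∧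
    ((i ∉ E ∧ E ∈ 𝓔) ∨
     (i ∈ E ∧ Odd ((if insert j E ∈ 𝓔 then 1 else 0) +
        (if E ∈ 𝓔 then 1 else 0) + (if insert j (E.erase i) ∈ 𝓔 then 1 else 0)))))

def EdgeIso {n : ℕ} (𝓔 𝓔' : Finset (Finset (Fin n))) : Prop :=
  ∃ φ : Fin n ≃ Fin n, ∀ s : Finset (Fin n), s.image φ ∈ 𝓔' ↔ s ∈ 𝓔

def IrreducibleBF (f : BF) : Prop :=
  ∃ f' : BF, StrictMinor f' f ∧ ∀ g : BF, StrictMinor g f → Minor g f'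

def graphOf {n : ℕ} (𝓔 : Finset (Finset (Fin n))) : SimpleGraph (Fin n) where
  Adj i j := i ≠ j ∧ ({i, j} : Finset (Fin n)) ∈ 𝓔
  symm := ⟨fun i j h => ⟨h.1.symm, Finset.pair_comm i j ▸ h.2⟩⟩
  loopless := by
    constructor
    intro i h
    exact h.1 rfl

theorem nonedge_identification_without_isolated (n : ℕ)
    (𝓔 : Finset (Finset (Fin n))) (hedges : ∀ s ∈ 𝓔, s.card = 2)
    (hconn : (graphOf 𝓔).Connected)
    (hne : ∃ i j : Fin n, i ≠ j ∧ ({i, j} : Finset (Fin n)) ∉ 𝓔 ∧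
      ∀ v : Fin n, v ≠ j → ∃ s ∈ identEdges 𝓔 i j, v ∈ s) :
    ∃ i j : Fin n, i ≠ j ∧ ({i, j} : Finset (Fin n)) ∈ 𝓔 ∧
      ∀ v : Fin n, v ≠ j → ∃ s ∈ identEdges 𝓔 i j, v ∈ s := by
  classical
  by_contra hgoal
  push_neg at hgoal
  obtain ⟨p, q, hpq, hpqE, -⟩ := hne
  have hcard3 : ∀ s : Finset (Fin n), s.card ≠ 2 → s ∉ 𝓔 :=
    fun s hc hs => hc (hedges s hs)
  -- membership lemma A : edges avoiding a and b survive
  have memA : ∀ a b : Fin n, ∀ s ∈ 𝓔, a ∉ s → b ∉ s → s ∈ identEdges 𝓔 a b := by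
    intro a b s hs ha hb
    simp only [identEdges, Finset.mem_filter, Finset.mem_univ, true_and]
    exact ⟨hb, Or.inl ⟨ha, hs⟩⟩
  -- membership lemma B : {a} is an edge of the identification when {a,b} ∈ 𝓔
  have memB : ∀ a b : Fin n, a ≠ b → ({a, b} : Finset (Fin n)) ∈ 𝓔 →
      ({a} : Finset (Fin n)) ∈ identEdges 𝓔 a b := by
    intro a b hab habE
    simp only [identEdges, Finset.mem_filter, Finset.mem_univ, true_and]
    refine ⟨by simp [hab.symm], Or.inr ⟨Finset.mem_singleton_self a, ?_⟩⟩
    have h1 : insert b ({a} : Finset (Fin n)) ∈ 𝓔 := by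
      rwa [Finset.pair_comm a b] at habE
    have h2 : ({a} : Finset (Fin n)) ∉ 𝓔 := hcard3 _ (by simp)
    have h3 : insert b (({a} : Finset (Fin n)).erase a) ∉ 𝓔 := by
      rw [Finset.erase_singleton]
      exact hcard3 _ (by simp)
    rw [if_pos h1, if_neg h2, if_neg h3]
    decide
  -- membership lemma C : {a,v} when exactly one of {a,v},{b,v} is an edge
  have memC : ∀ a b v : Fin n, a ≠ b → v ≠ a → v ≠ b →
      (({a, v} : Finset (Fin n)) ∈ 𝓔 ↔ ({b, v} : Finset (Fin n)) ∉ 𝓔) →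
      ({a, v} : Finset (Fin n)) ∈ identEdges 𝓔 a b := by
    intro a b v hab hva hvb hone
    simp only [identEdges, Finset.mem_filter, Finset.mem_univ, true_and]
    refine ⟨by simp [hab.symm, hvb.symm], Or.inr ⟨by simp, ?_⟩⟩
    have h1 : insert b ({a, v} : Finset (Fin n)) ∉ 𝓔 := by
      apply hcard3
      rw [Finset.card_insert_of_notMem (by simp [hab.symm, hvb.symm]),
        Finset.card_insert_of_notMem (by simp [hva.symm]), Finset.card_singleton]
      decide
    have h3 : insert b (({a, v} : Finset (Fin n)).erase a) = {b, v} := by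
      rw [show ({a, v} : Finset (Fin n)) = insert a {v} from rfl,
        Finset.erase_insert (by simp [hva.symm])]
    rw [h3, if_neg h1]
    by_cases h : ({a, v} : Finset (Fin n)) ∈ 𝓔
    · rw [if_pos h, if_neg (hone.mp h)]; decide
    · rw [if_neg h, if_pos (by by_contra hc; exact h (hone.mpr hc))]; decide
  -- any vertex with a distinct companion has a neighbour
  have exAdj : ∀ x y : Fin n, x ≠ y → ∃ z, ({x, z} : Finset (Fin n)) ∈ 𝓔 := by
    intro x y hxy
    obtain ⟨w⟩ := hconn.preconnected x y
    cases w with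
    | nil => exact absurd rfl hxy
    | cons h _ => exact ⟨_, h.2⟩
  have nediag : ∀ x y : Fin n, ({x, y} : Finset (Fin n)) ∈ 𝓔 → x ≠ y := by
    intro x y h hxy
    subst hxy
    have := hedges _ h
    simp at this
  -- every edge has a vertex whose neighbourhood is exactly the edge
  have bad : ∀ a b : Fin n, a ≠ b → ({a, b} : Finset (Fin n)) ∈ 𝓔 →
      ∃ v, v ≠ a ∧ v ≠ b ∧ ({v, a} : Finset (Fin n)) ∈ 𝓔 ∧
        ({v, b} : Finset (Fin n)) ∈ 𝓔 ∧
        ∀ u, ({v, u} : Finset (Fin n)) ∈ 𝓔 → u = a ∨ u = b := by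
    intro a b hab habE
    obtain ⟨v, hvb, hv⟩ := hgoal a b hab habE
    have hva : v ≠ a := by
      intro h
      exact hv {a} (memB a b hab habE) (by simp [h])
    have hvN : ∀ u, ({v, u} : Finset (Fin n)) ∈ 𝓔 → u = a ∨ u = b := by
      intro u hu
      by_contra hcon
      push_neg at hcon
      have huv : u ≠ v := (nediag v u hu).symm
      exact hv {v, u} (memA a b _ hu (by simp [hva.symm, Ne.symm hcon.1])
        (by simp [hvb.symm, Ne.symm hcon.2])) (by simp)
    obtain ⟨u, hu⟩ := exAdj v a hva
    have honeF : ¬ (({a, v} : Finset (Fin n)) ∈ 𝓔 ↔ ({b, v} : Finset (Fin n)) ∉ 𝓔) := by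
      intro hone
      exact hv {a, v} (memC a b v hab hva hvb hone) (by simp)
    have hex : ({v, a} : Finset (Fin n)) ∈ 𝓔 ∨ ({v, b} : Finset (Fin n)) ∈ 𝓔 := by
      rcases hvN u hu with h | h <;> [left; right] <;> rwa [h] at hu
    have hboth : ({v, a} : Finset (Fin n)) ∈ 𝓔 ∧ ({v, b} : Finset (Fin n)) ∈ 𝓔 := by
      by_cases h1 : ({v, a} : Finset (Fin n)) ∈ 𝓔 <;>
        by_cases h2 : ({v, b} : Finset (Fin n)) ∈ 𝓔
      · exact ⟨h1, h2⟩
      · exact absurd ⟨fun _ => by rwa [Finset.pair_comm], fun _ => by rwa [Finset.pair_comm a v]⟩ honeF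
      · refine absurd ⟨fun h => ?_, fun h => ?_⟩ honeF
        · exact absurd (by rwa [Finset.pair_comm a v] at h) h1
        · exact (h (show ({b, v} : Finset (Fin n)) ∈ 𝓔 by
            rwa [Finset.pair_comm v b] at h2)).elim
      · rcases hex with h | h
        · exact absurd h h1
        · exact absurd h h2
    exact ⟨v, hva, hvb, hboth.1, hboth.2, hvN⟩
  -- build the triangle
  obtain ⟨b, hpbE⟩ := exAdj p q hpq
  have hpb : p ≠ b := nediag p b hpbE
  obtain ⟨v, hvp, hvb, hvpE, hvbE, hvN⟩ := bad p b hpb hpbE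
  obtain ⟨w, hwv, hwp, hwvE, hwpE, hwN⟩ := bad v p hvp hvpE
  have hwb : w = b := by
    rcases hvN w (by rwa [Finset.pair_comm] at hwvE) with h | h
    · exact absurd h hwp
    · exact h
  have hbN : ∀ u, ({b, u} : Finset (Fin n)) ∈ 𝓔 → u = v ∨ u = p := hwb ▸ hwN
  obtain ⟨w', hw'v, hw'b, hw'vE, hw'bE, hw'N⟩ := bad v b hvb hvbE
  have hw'p : w' = p := by
    rcases hvN w' (by rwa [Finset.pair_comm] at hw'vE) with h | h
    · exact h
    · exact absurd h hw'b
  have hpN : ∀ u, ({p, u} : Finset (Fin n)) ∈ 𝓔 → u = v ∨ u = b := hw'p ▸ hw'N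
  -- closure under adjacency
  have step : ∀ x y : Fin n, ({x, y} : Finset (Fin n)) ∈ 𝓔 →
      (x = v ∨ x = p ∨ x = b) → (y = v ∨ y = p ∨ y = b) := by
    rintro x y hxy (rfl | rfl | rfl)
    · rcases hvN y hxy with h | h
      · exact Or.inr (Or.inl h)
      · exact Or.inr (Or.inr h)
    · rcases hpN y hxy with h | h
      · exact Or.inl h
      · exact Or.inr (Or.inr h)
    · rcases hbN y hxy with h | h
      · exact Or.inl h
      · exact Or.inr (Or.inl h)
  have key : ∀ x y : Fin n, (graphOf 𝓔).Walk x y →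
      (x = v ∨ x = p ∨ x = b) → (y = v ∨ y = p ∨ y = b) := by
    intro x y w
    induction w with
    | nil => exact id
    | cons h _ ih => exact fun hx => ih (step _ _ h.2 hx)
  have hall : ∀ x : Fin n, x = v ∨ x = p ∨ x = b := by
    intro x
    obtain ⟨w⟩ := hconn.preconnected v x
    exact key v x w (Or.inl rfl)
  -- contradiction with the non-edge {p, q}
  have e1 : ({v, p} : Finset (Fin n)) ∈ 𝓔 := hvpE
  have e2 : ({v, b} : Finset (Fin n)) ∈ 𝓔 := hvbE
  have e3 : ({p, b} : Finset (Fin n)) ∈ 𝓔 := hpbE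
  rcases hall q with rfl | rfl | rfl
  · exact hpqE (by rwa [Finset.pair_comm] at e1)
  · exact hpq rfl
  · exact hpqE e3
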